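/- Let f : ℝ² × S¹ → ℂ be continuous and supported in K × S¹ for some compact K ⊂ ℝ². Then for every ξ ∈ ℝ² and every r ≥ 0, the Fourier transform in x of the anisotropic spherical Radon transform satisfies ∫_{ℝ²} e^{−i x·ξ} (Sf)(x,r) dx = ∫_{S¹} e^{i r θ·ξ} (ℱf)(ξ, θ) ds(θ). -/

import Mathlib

open MeasureTheory Real

noncomputable section

/-- The point of the unit circle `S¹ ⊂ ℝ²` at angle `t`. -/
def circ (t : ℝ) : ℝ × ℝ := (Real.cos t, Real.sin t)

/-- The anisotropic spherical Radon transform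
`(S f)(x, r) = ∫_{S¹} f(x + rθ, θ) ds(θ)`. -/
def radonS (f : ℝ × ℝ → ℝ × ℝ → ℂ) (x : ℝ × ℝ) (r : ℝ) : ℂ :=
  ∫ t in (0 : ℝ)..(2 * π), f (x + r • circ t) (circ t)

/-- The Fourier transform in the first variable,
`(ℱ f)(ξ, θ) = ∫_{ℝ²} e^{−i x·ξ} f(x, θ) dx`. -/
def fourier1 (f : ℝ × ℝ → ℝ × ℝ → ℂ) (ξ θ : ℝ × ℝ) : ℂ :=
  ∫ x : ℝ × ℝ, Complex.exp (-Complex.I * ((x.1 * ξ.1 + x.2 * ξ.2 : ℝ) : ℂ)) * f x θ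

lemma circ_continuous : Continuous circ := by
  unfold circ
  exact continuous_cos.prodMk continuous_sin

/-- **Fourier transform of the anisotropic spherical Radon transform.** For a continuous
`f : ℝ² × S¹ → ℂ` supported in `K × S¹` with `K` compact, for every frequency `ξ` and
radius `r ≥ 0`,
`∫_{ℝ²} e^{−i x·ξ} (S f)(x, r) dx = ∫_{S¹} e^{i r θ·ξ} (ℱ f)(ξ, θ) ds(θ)`. -/
theorem fourier_of_radon
    (f : ℝ × ℝ → ℝ × ℝ → ℂ)
    (hf : Continuous (fun p : (ℝ × ℝ) × ℝ => f p.1 (circ p.2)))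
    (K : Set (ℝ × ℝ)) (hK : IsCompact K)
    (hsupp : ∀ x ∉ K, ∀ t : ℝ, f x (circ t) = 0) :
    ∀ ξ : ℝ × ℝ, ∀ r : ℝ, 0 ≤ r →
      (∫ x : ℝ × ℝ, Complex.exp (-Complex.I * ((x.1 * ξ.1 + x.2 * ξ.2 : ℝ) : ℂ)) *
          radonS f x r) =
        ∫ t in (0 : ℝ)..(2 * π),
          Complex.exp (Complex.I *
              ((r * ((circ t).1 * ξ.1 + (circ t).2 * ξ.2) : ℝ) : ℂ)) *
            fourier1 f ξ (circ t) := by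
  intro ξ r hr
  have h2π : (0:ℝ) ≤ 2 * π := by positivity
  set K' : Set (ℝ × ℝ) := Metric.cthickening r K with hK'def
  have hK' : IsCompact K' := hK.cthickening
  have hK'meas : MeasurableSet K' := hK'.isClosed.measurableSet
  set ν : Measure ℝ := volume.restrict (Set.Ioc 0 (2*π)) with hν
  set F : (ℝ × ℝ) → ℝ → ℂ := fun x t =>
    Complex.exp (-Complex.I * ((x.1 * ξ.1 + x.2 * ξ.2 : ℝ) : ℂ)) *
      f (x + r • circ t) (circ t) with hF
  have hFcont : Continuous (fun p : (ℝ × ℝ) × ℝ => F p.1 p.2) := by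
    apply Continuous.mul
    · apply Complex.continuous_exp.comp
      apply Continuous.mul continuous_const
      exact Complex.continuous_ofReal.comp
        (((continuous_fst.fst).mul continuous_const).add
          ((continuous_fst.snd).mul continuous_const))
    · exact hf.comp ((continuous_fst.add
        ((continuous_const (y := r)).smul (circ_continuous.comp continuous_snd))).prodMk continuous_snd)
  obtain ⟨C, hC⟩ := (hK'.prod (isCompact_Icc (a := (0:ℝ)) (b := 2*π))).exists_bound_of_continuousOn
    hf.continuousOn
  set C' := max C 0 with hC'
  -- a.e. membership of the second coordinate
  have hmem : ∀ᵐ p ∂((volume : Measure (ℝ × ℝ)).prod ν), p.2 ∈ Set.Ioc 0 (2*π) := by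
    have hprodeq : (volume : Measure (ℝ × ℝ)).prod ν =
        ((volume : Measure (ℝ × ℝ)).prod (volume : Measure ℝ)).restrict
          (Set.univ ×ˢ Set.Ioc 0 (2*π)) := by
      rw [hν, ← Measure.prod_restrict, Measure.restrict_univ]
    rw [hprodeq]
    filter_upwards [ae_restrict_mem (MeasurableSet.univ.prod measurableSet_Ioc)] with p hp
    exact hp.2
  have hbound : ∀ᵐ p ∂((volume : Measure (ℝ × ℝ)).prod ν),
      ‖F p.1 p.2‖ ≤ K'.indicator (fun _ => C') p.1 := by
    filter_upwards [hmem] with p hp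
    have hnorm : ‖F p.1 p.2‖ = ‖f (p.1 + r • circ p.2) (circ p.2)‖ := by
      rw [hF]
      simp [norm_mul, Complex.norm_exp]
    by_cases h0 : f (p.1 + r • circ p.2) (circ p.2) = 0
    · rw [hnorm, h0, norm_zero]
      exact Set.indicator_nonneg (fun _ _ => le_max_right _ _) _
    · have hxK : p.1 + r • circ p.2 ∈ K := by
        by_contra h
        exact h0 (hsupp _ h p.2)
      have hx : p.1 ∈ K' := by
        apply Metric.mem_cthickening_of_dist_le p.1 (p.1 + r • circ p.2) r K hxK
        have hd : dist p.1 (p.1 + r • circ p.2) = ‖r • circ p.2‖ := by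
          rw [dist_eq_norm]
          simp
        rw [hd, norm_smul]
        have hc1 : ‖circ p.2‖ ≤ 1 := by
          rw [circ, Prod.norm_def]
          simp only [Real.norm_eq_abs]
          exact max_le (abs_cos_le_one _) (abs_sin_le_one _)
        calc ‖r‖ * ‖circ p.2‖ ≤ ‖r‖ * 1 := by
              exact mul_le_mul_of_nonneg_left hc1 (norm_nonneg _)
          _ = r := by rw [mul_one, Real.norm_eq_abs, abs_of_nonneg hr]
      rw [Set.indicator_of_mem hx, hnorm]
      refine le_trans (hC (p.1 + r • circ p.2, p.2) ⟨Metric.self_subset_cthickening K hxK,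
        ⟨hp.1.le, hp.2⟩⟩) (le_max_left _ _)
  have hg : Integrable (fun p : (ℝ × ℝ) × ℝ => K'.indicator (fun _ => C') p.1)
      (volume.prod ν) := by
    have h1 : Integrable (K'.indicator fun _ => C') (volume : Measure (ℝ × ℝ)) := by
      rw [integrable_indicator_iff hK'meas]
      exact integrableOn_const hK'.measure_lt_top.ne
    have h2 : Integrable (fun _ : ℝ => (1:ℝ)) ν :=
      integrableOn_const measure_Ioc_lt_top.ne
    simpa using h1.mul_prod h2
  have hInt : Integrable (Function.uncurry F) (volume.prod ν) :=
    Integrable.mono' hg hFcont.aestronglyMeasurable hbound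
  have hswap : (∫ x : ℝ × ℝ, ∫ t, F x t ∂ν) = ∫ t, (∫ x : ℝ × ℝ, F x t) ∂ν :=
    integral_integral_swap hInt
  calc (∫ x : ℝ × ℝ, Complex.exp (-Complex.I * ((x.1 * ξ.1 + x.2 * ξ.2 : ℝ) : ℂ)) *
          radonS f x r)
      = ∫ x : ℝ × ℝ, ∫ t, F x t ∂ν := by
        congr 1 with x
        rw [radonS, ← intervalIntegral.integral_const_mul,
          intervalIntegral.integral_of_le h2π]
    _ = ∫ t, (∫ x : ℝ × ℝ, F x t) ∂ν := hswap
    _ = ∫ t in (0:ℝ)..(2*π),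
          Complex.exp (Complex.I *
              ((r * ((circ t).1 * ξ.1 + (circ t).2 * ξ.2) : ℝ) : ℂ)) *
            fourier1 f ξ (circ t) := by
        rw [intervalIntegral.integral_of_le h2π]
        apply integral_congr_ae
        apply Filter.Eventually.of_forall
        intro t
        set c := r • circ t with hc
        have hdot : (c.1 * ξ.1 + c.2 * ξ.2 : ℝ)
            = r * ((circ t).1 * ξ.1 + (circ t).2 * ξ.2) := by
          simp only [hc, Prod.smul_fst, Prod.smul_snd, smul_eq_mul]
          ring
        have key : ∀ x : ℝ × ℝ, F x t
            = Complex.exp (Complex.I * ((c.1 * ξ.1 + c.2 * ξ.2 : ℝ) : ℂ)) *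
              (Complex.exp (-Complex.I *
                  (((x + c).1 * ξ.1 + (x + c).2 * ξ.2 : ℝ) : ℂ)) * f (x + c) (circ t)) := by
          intro x
          have h1 : (x + c).1 = x.1 + c.1 := rfl
          have h2 : (x + c).2 = x.2 + c.2 := rfl
          have hexp : -Complex.I * ((x.1 * ξ.1 + x.2 * ξ.2 : ℝ) : ℂ)
              = Complex.I * ((c.1 * ξ.1 + c.2 * ξ.2 : ℝ) : ℂ) +
                -Complex.I * (((x + c).1 * ξ.1 + (x + c).2 * ξ.2 : ℝ) : ℂ) := by
            rw [h1, h2]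
            push_cast
            ring
          simp only [hF]
          rw [← mul_assoc, ← Complex.exp_add, ← hexp]
        simp_rw [key]
        rw [integral_const_mul, hdot]
        congr 1
        rw [fourier1]
        exact integral_add_right_eq_self
          (fun y : ℝ × ℝ => Complex.exp (-Complex.I * ((y.1 * ξ.1 + y.2 * ξ.2 : ℝ) : ℂ)) *
            f y (circ t)) c

end
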